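/- For every natural number n, 108^n · ∑_{k=0}^n C(−1/3, k)·C(−1/6, k)·C(−1/3, n−k)·C(−1/6, n−k) = C(2n, n)² · C(3n, n), where on the right-hand side C(m, k) denotes the usual integer binomial coefficient. -/
import Mathlib


/-- Generalized binomial coefficient `C(x, k) = x(x-1)⋯(x-k+1)/k!`. -/
noncomputable def genBinom (x : ℝ) (k : ℕ) : ℝ :=
  (∏ i ∈ Finset.range k, (x - i)) / (Nat.factorial k)

lemma genBinom_succ (x : ℝ) (k : ℕ) :
    genBinom x (k+1) = genBinom x k * (x - k) / (k+1) := by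
  unfold genBinom
  rw [Finset.prod_range_succ, Nat.factorial_succ]
  have hk : (k:ℝ)+1 ≠ 0 := by positivity
  have hf : ((Nat.factorial k : ℕ):ℝ) ≠ 0 := by
    exact_mod_cast Nat.factorial_ne_zero k
  push_cast
  rw [div_mul_eq_mul_div, div_div, div_eq_div_iff (by positivity) (by positivity)]
  ring

/-- Scaled coefficient `c k = 108^k C(-1/3,k) C(-1/6,k)`. -/
noncomputable def myc (k : ℕ) : ℝ :=
  108^k * genBinom (-1/3) k * genBinom (-1/6) k

lemma myc_zero : myc 0 = 1 := by
  simp [myc, genBinom]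

lemma myc_succ (k : ℕ) :
    myc (k+1) = 6*(6*(k:ℝ)+1)*(3*(k:ℝ)+1) * myc k / ((k:ℝ)+1)^2 := by
  unfold myc
  rw [genBinom_succ, genBinom_succ, pow_succ]
  have hk : (k:ℝ)+1 ≠ 0 := by positivity
  field_simp
  ring

/-- The convolution sum. -/
noncomputable def Tsum (n : ℕ) : ℝ :=
  ∑ k ∈ Finset.range (n+1), myc k * myc (n-k)

lemma Tsum_rec (n : ℕ) :
    ((n:ℝ)+1)^3 * Tsum (n+1)
      = 6*(2*(n:ℝ)+1)*(3*(n:ℝ)+1)*(3*(n:ℝ)+2) * Tsum n := by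
  set g : ℕ → ℝ := fun j => -(j:ℝ)^2*(3*(n:ℝ)+3-2*(j:ℝ)) * (myc j * myc (n+1-j)) with hg
  have hterm : ∀ k ∈ Finset.range (n+1),
      ((n:ℝ)+1)^3 * (myc k * myc (n+1-k))
        - 6*(2*(n:ℝ)+1)*(3*(n:ℝ)+1)*(3*(n:ℝ)+2) * (myc k * myc (n-k))
      = g (k+1) - g k := by
    intro k hk
    rw [Finset.mem_range, Nat.lt_succ_iff] at hk
    have h1 : n + 1 - k = (n-k) + 1 := by omega
    have h2 : n + 1 - (k+1) = n - k := by omega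
    have h3 : ((n - k : ℕ) : ℝ) = (n:ℝ) - (k:ℝ) := by
      exact Nat.cast_sub hk
    simp only [hg, h1, h2]
    rw [myc_succ k, myc_succ (n-k), h3]
    have hk0 : ((k:ℝ)+1) ≠ 0 := by positivity
    have hm0 : ((n:ℝ)-(k:ℝ)+1) ≠ 0 := by
      have hkn : (k:ℝ) ≤ (n:ℝ) := by exact_mod_cast hk
      nlinarith
    push_cast
    field_simp
    ring
  have key2 := Finset.sum_congr rfl hterm
  rw [Finset.sum_range_sub g (n+1)] at key2
  have hg0 : g 0 = 0 := by simp [hg]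
  have hgn : g (n+1) = -(((n:ℝ)+1)^3) * (myc (n+1) * myc 0) := by
    simp only [hg]
    rw [show n+1-(n+1) = 0 from by omega]
    push_cast
    ring
  rw [hg0, hgn, Finset.sum_sub_distrib, ← Finset.mul_sum, ← Finset.mul_sum] at key2
  have expand : Tsum (n+1)
      = (∑ k ∈ Finset.range (n+1), myc k * myc (n+1-k)) + myc (n+1) * myc 0 := by
    rw [Tsum, Finset.sum_range_succ]
    rw [show n+1-(n+1) = 0 from by omega]
  rw [expand, Tsum]
  linear_combination key2

/-- Right-hand side. -/
noncomputable def Dval (n : ℕ) : ℝ :=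
  ((2 * n).choose n : ℝ) ^ 2 * ((3 * n).choose n : ℝ)

lemma Dval_rec (n : ℕ) :
    ((n:ℝ)+1)^3 * Dval (n+1)
      = 6*(2*(n:ℝ)+1)*(3*(n:ℝ)+1)*(3*(n:ℝ)+2) * Dval n := by
  unfold Dval
  have c1 : ((2*(n+1)).choose (n+1) : ℝ)
      = ((2*n+2).factorial : ℝ) / (((n+1).factorial : ℝ) * ((n+1).factorial : ℝ)) := by
    rw [show 2*(n+1) = 2*n+2 from by ring, Nat.cast_choose ℝ (by omega)]
    rw [show 2*n+2-(n+1) = n+1 from by omega]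
  have c2 : ((3*(n+1)).choose (n+1) : ℝ)
      = ((3*n+3).factorial : ℝ) / (((n+1).factorial : ℝ) * ((2*n+2).factorial : ℝ)) := by
    rw [show 3*(n+1) = 3*n+3 from by ring, Nat.cast_choose ℝ (by omega)]
    rw [show 3*n+3-(n+1) = 2*n+2 from by omega]
  have c3 : ((2*n).choose n : ℝ)
      = ((2*n).factorial : ℝ) / ((n.factorial : ℝ) * (n.factorial : ℝ)) := by
    rw [Nat.cast_choose ℝ (by omega)]
    rw [show 2*n-n = n from by omega]
  have c4 : ((3*n).choose n : ℝ)
      = ((3*n).factorial : ℝ) / ((n.factorial : ℝ) * ((2*n).factorial : ℝ)) := by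
    rw [Nat.cast_choose ℝ (by omega)]
    rw [show 3*n-n = 2*n from by omega]
  have f1 : (2*n+2).factorial = (2*n+2)*((2*n+1)*(2*n).factorial) := by
    rw [show 2*n+2 = (2*n+1)+1 from by ring, Nat.factorial_succ, Nat.factorial_succ]
  have f2 : (3*n+3).factorial = (3*n+3)*((3*n+2)*((3*n+1)*(3*n).factorial)) := by
    rw [show 3*n+3 = (3*n+2)+1 from by ring, Nat.factorial_succ,
      show 3*n+2 = (3*n+1)+1 from by ring, Nat.factorial_succ, Nat.factorial_succ]
  have f3 : (n+1).factorial = (n+1)*n.factorial := Nat.factorial_succ n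
  rw [c1, c2, c3, c4, f1, f2, f3]
  have h1 : (n.factorial : ℝ) ≠ 0 := by exact_mod_cast Nat.factorial_ne_zero n
  have h2 : ((2*n).factorial : ℝ) ≠ 0 := by exact_mod_cast Nat.factorial_ne_zero (2*n)
  have h3 : (n:ℝ)+1 ≠ 0 := by positivity
  push_cast
  field_simp
  ring

lemma Tsum_eq_Dval (n : ℕ) : Tsum n = Dval n := by
  induction n with
  | zero => simp [Tsum, Dval, myc_zero]
  | succ n ih =>
    have h3 : ((n:ℝ)+1)^3 ≠ 0 := by positivity
    apply mul_left_cancel₀ h3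
    rw [Tsum_rec n, Dval_rec n, ih]

theorem lemma_108 (n : ℕ) :
    108 ^ n * ∑ k ∈ Finset.range (n + 1),
        genBinom (-1/3) k * genBinom (-1/6) k *
          genBinom (-1/3) (n - k) * genBinom (-1/6) (n - k)
      = ((2 * n).choose n : ℝ) ^ 2 * ((3 * n).choose n : ℝ) := by
  have h : (108:ℝ) ^ n * ∑ k ∈ Finset.range (n + 1),
        genBinom (-1/3) k * genBinom (-1/6) k *
          genBinom (-1/3) (n - k) * genBinom (-1/6) (n - k) = Tsum n := by
    rw [Tsum, Finset.mul_sum]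
    apply Finset.sum_congr rfl
    intro k hk
    rw [Finset.mem_range, Nat.lt_succ_iff] at hk
    have hp : (108:ℝ)^n = 108^k * 108^(n-k) := by
      rw [← pow_add]
      congr 1
      omega
    rw [hp, myc, myc]
    ring
  rw [h, Tsum_eq_Dval, Dval]
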